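/- Let x_1,...,x_r, a, b be non-negative integers and m = x_1 + ... + x_r. If |a - m/2| ≥ |b - m/2|, then S(x_1,...,x_r; a) ≤ S(x_1,...,x_r; b), where S(x_1,...,x_r; c) is the number of integer tuples (y_1,...,y_r) with 0 ≤ y_i ≤ x_i for each i and y_1 + ... + y_r = c. -/

import Mathlib

/-- `S x a` is the number of integer tuples `y` with `0 ≤ y i ≤ x i` and sum `a`. -/
def S {r : ℕ} (x : Fin r → ℕ) (a : ℤ) : ℕ :=
  ((Fintype.piFinset fun i => Finset.range (x i + 1)).filter
    (fun y => (∑ i, (y i : ℤ)) = a)).card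

lemma S_sym {r : ℕ} (x : Fin r → ℕ) (c : ℤ) :
    S x c = S x ((∑ i, (x i : ℤ)) - c) := by
  unfold S
  apply Finset.card_nbij' (fun y => fun i => x i - y i) (fun y => fun i => x i - y i)
  · intro y hy
    simp only [Finset.mem_coe, Finset.mem_filter, Fintype.mem_piFinset, Finset.mem_range] at hy ⊢
    obtain ⟨h1, h2⟩ := hy
    refine ⟨fun i => by omega, ?_⟩
    have : ∀ i, ((x i - y i : ℕ) : ℤ) = (x i : ℤ) - (y i : ℤ) := by
      intro i; have := h1 i; omega
    rw [Finset.sum_congr rfl (fun i _ => this i), Finset.sum_sub_distrib, h2]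
  · intro y hy
    simp only [Finset.mem_coe, Finset.mem_filter, Fintype.mem_piFinset, Finset.mem_range] at hy ⊢
    obtain ⟨h1, h2⟩ := hy
    refine ⟨fun i => by omega, ?_⟩
    have : ∀ i, ((x i - y i : ℕ) : ℤ) = (x i : ℤ) - (y i : ℤ) := by
      intro i; have := h1 i; omega
    rw [Finset.sum_congr rfl (fun i _ => this i), Finset.sum_sub_distrib, h2]
    ring
  · intro y hy
    simp only [Finset.mem_coe, Finset.mem_filter, Fintype.mem_piFinset, Finset.mem_range] at hy
    funext i; have := hy.1 i; simp only []; omega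
  · intro y hy
    simp only [Finset.mem_coe, Finset.mem_filter, Fintype.mem_piFinset, Finset.mem_range] at hy
    funext i; have := hy.1 i; simp only []; omega

lemma S_zero (x : Fin 0 → ℕ) (c : ℤ) : S x c = if c = 0 then 1 else 0 := by
  unfold S
  rcases eq_or_ne c 0 with rfl | hc
  · rw [if_pos rfl]
    rw [Finset.filter_true_of_mem (fun y _ => by simp)]
    simp [Fintype.card_piFinset]
  · rw [if_neg hc]
    rw [Finset.card_eq_zero]
    ext y
    simp [eq_comm, hc, Ne.symm hc]

lemma S_succ {r : ℕ} (x : Fin (r + 1) → ℕ) (c : ℤ) :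
    S x c = ∑ j ∈ Finset.range (x 0 + 1), S (Fin.tail x) (c - j) := by
  unfold S
  rw [Finset.card_eq_sum_card_fiberwise
    (f := fun y => y 0) (t := Finset.range (x 0 + 1))
    (fun y hy => by
      simp only [Finset.mem_coe, Finset.mem_filter, Fintype.mem_piFinset, Finset.mem_range] at hy
      simpa using hy.1 0)]
  refine Finset.sum_congr rfl (fun j hj => ?_)
  simp only [Finset.mem_range] at hj
  apply Finset.card_nbij' (fun y => Fin.tail y) (fun z => Fin.cons j z)
  · intro y hy
    simp only [Finset.mem_coe, Finset.mem_filter, Fintype.mem_piFinset, Finset.mem_range] at hy ⊢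
    obtain ⟨⟨h1, h2⟩, h3⟩ := hy
    refine ⟨fun i => h1 i.succ, ?_⟩
    rw [Fin.sum_univ_succ] at h2
    subst h3
    simp only [Fin.tail]
    omega
  · intro z hz
    simp only [Finset.mem_coe, Finset.mem_filter, Fintype.mem_piFinset, Finset.mem_range] at hz ⊢
    obtain ⟨h1, h2⟩ := hz
    refine ⟨⟨?_, ?_⟩, by simp⟩
    · intro i
      refine Fin.cases (by simpa using hj) (fun i => by simpa [Fin.tail] using h1 i) i
    · rw [Fin.sum_univ_succ]
      simp only [Fin.cons_zero, Fin.cons_succ]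
      omega
  · intro y hy
    simp only [Finset.mem_coe, Finset.mem_filter] at hy
    have h0 : y 0 = j := hy.2
    rw [← h0]
    exact Fin.cons_self_tail y
  · intro z hz
    simp

/-- From symmetry around `M` and monotonicity up to `M/2`, get the comparison form. -/
lemma P_of (f : ℤ → ℕ) (M : ℤ) (sym : ∀ c, f c = f (M - c))
    (mono : ∀ c, 2 * (c + 1) ≤ M → f c ≤ f (c + 1)) :
    ∀ a b : ℤ, |2 * b - M| ≤ |2 * a - M| → f a ≤ f b := by
  have chain : ∀ n : ℕ, ∀ c : ℤ, 2 * (c + n) ≤ M → f c ≤ f (c + n) := by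
    intro n
    induction n with
    | zero => simp
    | succ n ih =>
      intro c hc
      have h1 : f c ≤ f (c + n) := ih c (by push_cast at hc ⊢; omega)
      have h2 : f (c + n) ≤ f (c + n + 1) := mono (c + n) (by push_cast at hc ⊢; omega)
      calc f c ≤ f (c + n) := h1
        _ ≤ f (c + (n + 1 : ℕ)) := by push_cast; rw [← add_assoc]; exact h2
  have key : ∀ c : ℤ, ∃ c', f c' = f c ∧ 2 * c' ≤ M ∧ |2 * c - M| = M - 2 * c' := by
    intro c
    by_cases hc : 2 * c ≤ M
    · exact ⟨c, rfl, hc, by rcases abs_cases (2 * c - M) with ⟨e, _⟩ | ⟨e, _⟩ <;> omega⟩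
    · exact ⟨M - c, (sym c).symm, by omega,
        by rcases abs_cases (2 * c - M) with ⟨e, _⟩ | ⟨e, _⟩ <;> omega⟩
  intro a b hab
  obtain ⟨a', ha1, ha2, ha3⟩ := key a
  obtain ⟨b', hb1, hb2, hb3⟩ := key b
  have hle : a' ≤ b' := by omega
  have : f a' ≤ f b' := by
    have := chain (b' - a').toNat a' (by rw [Int.toNat_of_nonneg (by omega)]; omega)
    rwa [Int.toNat_of_nonneg (by omega), add_sub_cancel] at this
  omega

lemma S_mono : ∀ {r : ℕ} (x : Fin r → ℕ) (c : ℤ),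
    2 * (c + 1) ≤ ∑ i, (x i : ℤ) → S x c ≤ S x (c + 1) := by
  intro r
  induction r with
  | zero =>
    intro x c hc
    simp only [Finset.univ_eq_empty, Finset.sum_empty] at hc
    rw [S_zero, S_zero]
    split <;> omega
  | succ r ih =>
    intro x c hc
    set f := S (Fin.tail x) with hf
    set M' : ℤ := ∑ i, (Fin.tail x i : ℤ) with hM'
    have hsum : (∑ i, (x i : ℤ)) = (x 0 : ℤ) + M' := by
      rw [Fin.sum_univ_succ]; rfl
    set n := x 0 with hn
    have hP : ∀ a b : ℤ, |2 * b - M'| ≤ |2 * a - M'| → f a ≤ f b :=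
      P_of f M' (fun c => S_sym (Fin.tail x) c) (fun c hc => ih (Fin.tail x) c hc)
    rw [S_succ, S_succ]
    have e1 : ∑ j ∈ Finset.range (n + 1), f (c + 1 - j)
        = (∑ j ∈ Finset.range n, f (c - j)) + f (c + 1) := by
      rw [Finset.sum_range_succ']
      congr 1
      · refine Finset.sum_congr rfl fun j _ => ?_
        congr 1; push_cast; ring
      · norm_num
    have e2 : ∑ j ∈ Finset.range (n + 1), f (c - j)
        = (∑ j ∈ Finset.range n, f (c - j)) + f (c - n) := Finset.sum_range_succ _ n
    rw [e1, e2]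
    have hkey : f (c - n) ≤ f (c + 1) := by
      apply hP
      have hcn : 2 * (c + 1) ≤ M' + n := by omega
      rcases abs_cases (2 * (c + 1) - M') with ⟨e, _⟩ | ⟨e, _⟩ <;>
        rcases abs_cases (2 * (c - n) - M') with ⟨e', _⟩ | ⟨e', _⟩ <;> omega
    omega

theorem kostka_note_stmt1 {r : ℕ} (x : Fin r → ℕ) (a b : ℕ)
    (h : |(b : ℚ) - (∑ i, (x i : ℚ)) / 2| ≤ |(a : ℚ) - (∑ i, (x i : ℚ)) / 2|) :
    S x (a : ℤ) ≤ S x (b : ℤ) := by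
  set M : ℤ := ∑ i, (x i : ℤ) with hM
  have hMQ : (∑ i, (x i : ℚ)) = (M : ℚ) := by push_cast [hM]; norm_num
  have hZ : |2 * (b : ℤ) - M| ≤ |2 * (a : ℤ) - M| := by
    have e : ∀ t : ℚ, |2 * t - (M : ℚ)| = 2 * |t - (M : ℚ) / 2| := by
      intro t
      rw [show (2 : ℚ) * t - M = 2 * (t - M / 2) by ring, abs_mul]
      norm_num
    rw [hMQ] at h
    have h2 : |2 * (b : ℚ) - (M : ℚ)| ≤ |2 * (a : ℚ) - (M : ℚ)| := by
      rw [e, e]; linarith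
    rwa [show ((2 : ℚ) * b - M) = ((2 * (b : ℤ) - M : ℤ) : ℚ) by push_cast; ring,
      show ((2 : ℚ) * a - M) = ((2 * (a : ℤ) - M : ℤ) : ℚ) by push_cast; ring,
      ← Int.cast_abs, ← Int.cast_abs, Int.cast_le] at h2
  exact P_of (S x) M (fun c => S_sym x c) (fun c hc => S_mono x c hc) _ _ hZ
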